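/- (Lemma 1.) For every interpreted system with regular labelling with model M and every EHS⁺_{AB̄N} formula φ (an EHS⁺ formula whose modalities are all among K_i, C_Γ, ⟨A⟩, ⟨B̄⟩, ⟨N⟩), the set { MCT_I^φ : I an interval in M } of modal context trees has at most f(φ) elements. -/

import Mathlib

/-- The Halpern-Shoham interval modalities. -/
inductive HSMod : Type where
  | A | Abar | B | Bbar | D | Dbar | E | Ebar | L | Lbar | N | Nbar | O | Obar
  deriving DecidableEq

/-- Formulas of the logic EHS⁺ over agents `0,…,m` and propositional variables `V`. -/
inductive EHSFormula (m : ℕ) (V : Type) : Type where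
  | pt : EHSFormula m V
  | prop : V → EHSFormula m V
  | neg : EHSFormula m V → EHSFormula m V
  | conj : EHSFormula m V → EHSFormula m V → EHSFormula m V
  | know : Fin (m + 1) → EHSFormula m V → EHSFormula m V
  | common : Finset (Fin (m + 1)) → EHSFormula m V → EHSFormula m V
  | dia : HSMod → EHSFormula m V → EHSFormula m V
  deriving DecidableEq

/-- An interpreted system with regular labelling over agents `0,…,m` (agent `0` is the
environment) and variables `Var`. -/
structure ISRL (m : ℕ) (Var : Type) where
  L : Fin (m + 1) → Type
  finL : ∀ i, Fintype (L i)
  l0 : ∀ i, L i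
  ACT : Fin (m + 1) → Type
  finACT : ∀ i, Fintype (ACT i)
  P : ∀ i, L i → Set (ACT i)
  T : ∀ i, L i → (∀ j, ACT j) → L i → Prop
  lab : Var → RegularExpression (∀ i, L i)

attribute [instance] ISRL.finL ISRL.finACT

namespace ISRL

variable {m : ℕ} {Var : Type}

/-- Global configurations. -/
abbrev G (IS : ISRL m Var) : Type := ∀ i, IS.L i

instance (IS : ISRL m Var) : Fintype IS.G := Pi.instFintype

/-- The initial global configuration. -/
def g0 (IS : ISRL m Var) : IS.G := IS.l0

/-- The global transition relation `t^G`. -/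
def tG (IS : ISRL m Var) (g g' : IS.G) : Prop :=
  ∃ a : ∀ j, IS.ACT j, ∀ i, a i ∈ IS.P i (g i) ∧ IS.T i (g i) a (g' i)

/-- A partial state: a nonempty `t^G`-chain of configurations. -/
def IsPState (IS : ISRL m Var) (w : List IS.G) : Prop :=
  w ≠ [] ∧ w.Chain' IS.tG

/-- A global state of the model: a partial state starting at the initial configuration. -/
def IsState (IS : ISRL m Var) (w : List IS.G) : Prop :=
  IS.IsPState w ∧ w.head? = some IS.g0

/-- `g(s)`: the actual configuration of a (partial) state, i.e. its last configuration. -/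
def gOf (IS : ISRL m Var) (w : List IS.G) : IS.G := w.getLastD IS.g0

/-- The global transition relation `t` of the model: extension by exactly one configuration. -/
def step (IS : ISRL m Var) (w w' : List IS.G) : Prop := ∃ g : IS.G, w' = w ++ [g]

/-- Epistemic indistinguishability of states for agent `i`. -/
def simS (IS : ISRL m Var) (i : Fin (m + 1)) (w w' : List IS.G) : Prop :=
  IS.gOf w i = IS.gOf w' i

/-- An interval of the model: a nonempty `t`-path of global states. -/
def IsInterval (IS : ISRL m Var) (l : List (List IS.G)) : Prop :=
  l ≠ [] ∧ (∀ w ∈ l, IS.IsState w) ∧ l.Chain' IS.step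

/-- Intervals of the model of `IS`. -/
structure Interval (IS : ISRL m Var) : Type where
  seq : List (List IS.G)
  isInterval : IS.IsInterval seq

namespace Interval

variable {IS : ISRL m Var}

/-- `first(I)`. -/
def first (I : Interval IS) : List IS.G := I.seq.headD []

/-- `last(I)`. -/
def last (I : Interval IS) : List IS.G := I.seq.getLastD []

/-- `I` is a point interval. -/
def isPt (I : Interval IS) : Prop := I.seq.length = 1

/-- `g(I)`, the word of configurations read along `I`. -/
def gword (I : Interval IS) : List IS.G := I.seq.map IS.gOf

end Interval

section rels

variable {IS : ISRL m Var}

def relA (I I' : Interval IS) : Prop := I'.first = I.last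
def relB (I I' : Interval IS) : Prop :=
  ∃ J : List (List IS.G), J ≠ [] ∧ I.seq = I'.seq ++ J
def relD (I I' : Interval IS) : Prop :=
  ∃ J K : List (List IS.G), J ≠ [] ∧ K ≠ [] ∧ I.seq = J ++ I'.seq ++ K
def relE (I I' : Interval IS) : Prop :=
  ∃ J : List (List IS.G), J ≠ [] ∧ I.seq = J ++ I'.seq
def relL (I I' : Interval IS) : Prop := Relation.TransGen IS.step I.last I'.first
def relN (I I' : Interval IS) : Prop := IS.step I.last I'.first
def relO (I I' : Interval IS) : Prop :=
  ∃ J K : List (List IS.G), J ≠ [] ∧ K ≠ [] ∧ I.seq ++ J = K ++ I'.seq ∧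
    IS.IsInterval (I.seq ++ J)

end rels

/-- The Allen relations on intervals of the model of `IS`. -/
def hsRel (IS : ISRL m Var) : HSMod → Interval IS → Interval IS → Prop
  | .A => fun I I' => relA I I'
  | .Abar => fun I I' => relA I' I
  | .B => fun I I' => relB I I'
  | .Bbar => fun I I' => relB I' I
  | .D => fun I I' => relD I I'
  | .Dbar => fun I I' => relD I' I
  | .E => fun I I' => relE I I'
  | .Ebar => fun I I' => relE I' I
  | .L => fun I I' => relL I I'
  | .Lbar => fun I I' => relL I' I
  | .N => fun I I' => relN I I'
  | .Nbar => fun I I' => relN I' I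
  | .O => fun I I' => relO I I'
  | .Obar => fun I I' => relO I' I

/-- Epistemic indistinguishability of intervals for agent `i`. -/
def simI (IS : ISRL m Var) (i : Fin (m + 1)) (I I' : Interval IS) : Prop :=
  List.Forall₂ (IS.simS i) I.seq I'.seq

/-- `∼_Γ`: the transitive closure of the union of the `∼_i`, `i ∈ Γ`. -/
def simC (IS : ISRL m Var) (Γ : Finset (Fin (m + 1))) : Interval IS → Interval IS → Prop :=
  Relation.TransGen (fun I I' => ∃ i ∈ Γ, IS.simI i I I')

/-- Satisfaction of EHS⁺ formulas at an interval, with respect to a labelling `lab`. -/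
def Sat (IS : ISRL m Var) {W : Type} (lab : W → RegularExpression IS.G) :
    EHSFormula m W → Interval IS → Prop
  | .pt, I => I.isPt
  | .prop p, I => I.gword ∈ (lab p).matches'
  | .neg φ, I => ¬ Sat IS lab φ I
  | .conj φ ψ, I => Sat IS lab φ I ∧ Sat IS lab ψ I
  | .know i φ, I => ∀ I', IS.simI i I' I → Sat IS lab φ I'
  | .common Γ φ, I => ∀ I', IS.simC Γ I' I → Sat IS lab φ I'
  | .dia X φ, I => ∃ I', IS.hsRel X I I' ∧ Sat IS lab φ I'

end ISRL

/-- The `AB̄N` fragment of EHS⁺: all modalities are among `K_i`, `C_Γ`, `⟨A⟩`, `⟨B̄⟩`, `⟨N⟩`. -/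
def IsABN {m : ℕ} {V : Type} : EHSFormula m V → Prop
  | .pt => True
  | .prop _ => True
  | .neg φ => IsABN φ
  | .conj φ ψ => IsABN φ ∧ IsABN ψ
  | .know _ φ => IsABN φ
  | .common _ φ => IsABN φ
  | .dia X φ => (X = HSMod.A ∨ X = HSMod.Bbar ∨ X = HSMod.N) ∧ IsABN φ

/-- A size function on formulas (used as a termination measure). -/
def fsize {m : ℕ} {V : Type} : EHSFormula m V → ℕ
  | .pt => 1
  | .prop _ => 1
  | .neg φ => fsize φ + 1
  | .conj φ ψ => fsize φ + fsize ψ + 1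
  | .know _ φ => fsize φ + 1
  | .common _ φ => fsize φ + 1
  | .dia _ φ => fsize φ + 1

/-- The set of top-level subformulas of a formula: modal subformulas not in the scope of
any modality. -/
def TL {m : ℕ} {V : Type} [DecidableEq V] : EHSFormula m V → Finset (EHSFormula m V)
  | .pt => ∅
  | .prop _ => ∅
  | .neg φ => TL φ
  | .conj φ ψ => TL φ ∪ TL ψ
  | .know i φ => {EHSFormula.know i φ}
  | .common Γ φ => {EHSFormula.common Γ φ}
  | .dia X φ => {EHSFormula.dia X φ}

/-- The body of a (modal) formula. -/
def body {m : ℕ} {V : Type} : EHSFormula m V → EHSFormula m V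
  | .pt => .pt
  | .prop p => .prop p
  | .neg φ => .neg φ
  | .conj φ ψ => .conj φ ψ
  | .know _ φ => φ
  | .common _ φ => φ
  | .dia _ φ => φ

theorem fsize_body_lt {m : ℕ} {V : Type} [DecidableEq V] (φ : EHSFormula m V) :
    ∀ χ ∈ TL φ, fsize (body χ) < fsize φ := by
  induction φ with
  | pt => simp [TL]
  | prop p => simp [TL]
  | neg φ ih =>
      intro χ hχ
      have := ih χ hχ
      simp only [fsize]
      omega
  | conj φ ψ ih1 ih2 =>
      intro χ hχ
      simp only [TL, Finset.mem_union] at hχ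
      rcases hχ with h | h
      · have := ih1 χ h; simp only [fsize]; omega
      · have := ih2 χ h; simp only [fsize]; omega
  | know i φ ih =>
      intro χ hχ
      simp only [TL, Finset.mem_singleton] at hχ
      subst hχ
      simp only [body, fsize]
      omega
  | common Γ φ ih =>
      intro χ hχ
      simp only [TL, Finset.mem_singleton] at hχ
      subst hχ
      simp only [body, fsize]
      omega
  | dia X φ ih =>
      intro χ hχ
      simp only [TL, Finset.mem_singleton] at hχ
      subst hχ
      simp only [body, fsize]
      omega

/-- The function `f(φ) = base · ∏_{Xψ top-level subformula of φ} 2^{f(ψ)}`, where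
`base = 2·|G|²·∏_{p ∈ Var} |Q_p|` is supplied as a parameter. -/
def fval {m : ℕ} {V : Type} [DecidableEq V] (base : ℕ) (φ : EHSFormula m V) : ℕ :=
  base * ∏ χ ∈ (TL φ).attach, 2 ^ fval base (body χ.1)
termination_by fsize φ
decreasing_by exact fsize_body_lt φ χ.1 χ.2

namespace ISRL

variable {m : ℕ} {Var : Type}

/-- The relation on intervals associated with a top-level (modal) subformula:
`R_{K_i} = ∼_i`, `R_{C_Γ} = ∼_Γ`, and `R_{⟨X⟩} = R_X`. -/
def modRel (IS : ISRL m Var) {W : Type} : EHSFormula m W → Interval IS → Interval IS → Prop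
  | .know i _ => IS.simI i
  | .common Γ _ => IS.simC Γ
  | .dia X _ => IS.hsRel X
  | _ => fun _ _ => False

/-- Equality of the modal context trees `MCT_I^φ = MCT_{I'}^φ`, expressed recursively:
the root labels `(g(first(I)), g(last(I)), pi(I), 𝒜_{g(I)})` coincide, and for every
top-level subformula `Xψ` of `φ` the sets of subtrees `{MCT_J^ψ : I R_X J}` and
`{MCT_{J'}^ψ : I' R_X J'}` coincide. -/
def MCTEq (IS : ISRL m Var) [DecidableEq Var] (Q : Var → Type) (dfa : ∀ p, DFA IS.G (Q p))
    (φ : EHSFormula m Var) (I I' : Interval IS) : Prop :=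
  IS.gOf I.first = IS.gOf I'.first ∧
  IS.gOf I.last = IS.gOf I'.last ∧
  (I.isPt ↔ I'.isPt) ∧
  (∀ p, (dfa p).eval I.gword = (dfa p).eval I'.gword) ∧
  (∀ χ ∈ TL φ,
    (∀ J, IS.modRel χ I J → ∃ J', IS.modRel χ I' J' ∧ MCTEq IS Q dfa (body χ) J J') ∧
    (∀ J', IS.modRel χ I' J' → ∃ J, IS.modRel χ I J ∧ MCTEq IS Q dfa (body χ) J J'))
termination_by fsize φ
decreasing_by all_goals exact fsize_body_lt φ _ (by assumption)

end ISRL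

section Aux

open ISRL

variable {m : ℕ} {Var : Type} [DecidableEq Var] {IS : ISRL m Var} {Q : Var → Type}
  {dfa : ∀ p, DFA IS.G (Q p)}

theorem fsize_pos {V : Type} (φ : EHSFormula m V) : 1 ≤ fsize φ := by
  cases φ <;> simp [fsize]

theorem mctEq_refl_aux (n : ℕ) : ∀ (φ : EHSFormula m Var), fsize φ ≤ n →
    ∀ I, ISRL.MCTEq IS Q dfa φ I I := by
  induction n with
  | zero => intro φ h; have := fsize_pos φ; omega
  | succ n ih =>
    intro φ hφ I
    rw [ISRL.MCTEq]
    refine ⟨rfl, rfl, Iff.rfl, fun p => rfl, fun χ hχ => ?_⟩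
    have hb : fsize (body χ) ≤ n := by have := fsize_body_lt φ χ hχ; omega
    exact ⟨fun J hJ => ⟨J, hJ, ih _ hb J⟩, fun J hJ => ⟨J, hJ, ih _ hb J⟩⟩

theorem mctEq_refl (φ : EHSFormula m Var) (I) : ISRL.MCTEq IS Q dfa φ I I :=
  mctEq_refl_aux (fsize φ) φ le_rfl I

theorem mctEq_symm_aux (n : ℕ) : ∀ (φ : EHSFormula m Var), fsize φ ≤ n →
    ∀ I I', ISRL.MCTEq IS Q dfa φ I I' → ISRL.MCTEq IS Q dfa φ I' I := by
  induction n with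
  | zero => intro φ h; have := fsize_pos φ; omega
  | succ n ih =>
    intro φ hφ I I' h
    rw [ISRL.MCTEq] at h ⊢
    obtain ⟨h1, h2, h3, h4, h5⟩ := h
    refine ⟨h1.symm, h2.symm, h3.symm, fun p => (h4 p).symm, fun χ hχ => ?_⟩
    have hb : fsize (body χ) ≤ n := by have := fsize_body_lt φ χ hχ; omega
    obtain ⟨ha, hb'⟩ := h5 χ hχ
    refine ⟨fun J hJ => ?_, fun J hJ => ?_⟩
    · obtain ⟨J', hJ', he⟩ := hb' J hJ
      exact ⟨J', hJ', ih _ hb _ _ he⟩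
    · obtain ⟨J', hJ', he⟩ := ha J hJ
      exact ⟨J', hJ', ih _ hb _ _ he⟩

theorem mctEq_symm {φ : EHSFormula m Var} {I I'} (h : ISRL.MCTEq IS Q dfa φ I I') :
    ISRL.MCTEq IS Q dfa φ I' I := mctEq_symm_aux (fsize φ) φ le_rfl I I' h

theorem mctEq_trans_aux (n : ℕ) : ∀ (φ : EHSFormula m Var), fsize φ ≤ n →
    ∀ I₁ I₂ I₃, ISRL.MCTEq IS Q dfa φ I₁ I₂ → ISRL.MCTEq IS Q dfa φ I₂ I₃ →
      ISRL.MCTEq IS Q dfa φ I₁ I₃ := by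
  induction n with
  | zero => intro φ h; have := fsize_pos φ; omega
  | succ n ih =>
    intro φ hφ I₁ I₂ I₃ h h'
    rw [ISRL.MCTEq] at h h' ⊢
    obtain ⟨h1, h2, h3, h4, h5⟩ := h
    obtain ⟨h1', h2', h3', h4', h5'⟩ := h'
    refine ⟨h1.trans h1', h2.trans h2', h3.trans h3', fun p => (h4 p).trans (h4' p),
      fun χ hχ => ?_⟩
    have hb : fsize (body χ) ≤ n := by have := fsize_body_lt φ χ hχ; omega
    obtain ⟨ha, hb'⟩ := h5 χ hχ
    obtain ⟨ha', hb''⟩ := h5' χ hχ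
    refine ⟨fun J hJ => ?_, fun J hJ => ?_⟩
    · obtain ⟨J', hJ', he⟩ := ha J hJ
      obtain ⟨J'', hJ'', he'⟩ := ha' J' hJ'
      exact ⟨J'', hJ'', ih _ hb _ _ _ he he'⟩
    · obtain ⟨J', hJ', he⟩ := hb'' J hJ
      obtain ⟨J'', hJ'', he'⟩ := hb' J' hJ'
      exact ⟨J'', hJ'', ih _ hb _ _ _ he' he⟩

theorem mctEq_trans {φ : EHSFormula m Var} {I₁ I₂ I₃} (h : ISRL.MCTEq IS Q dfa φ I₁ I₂)
    (h' : ISRL.MCTEq IS Q dfa φ I₂ I₃) : ISRL.MCTEq IS Q dfa φ I₁ I₃ :=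
  mctEq_trans_aux (fsize φ) φ le_rfl I₁ I₂ I₃ h h'

theorem exists_reps {α S : Type*} [Fintype S] (s : α → S) (E : α → α → Prop)
    (hE : ∀ a b, s a = s b → E a b) :
    ∃ reps : List α, reps.length ≤ Fintype.card S ∧ ∀ a, ∃ b ∈ reps, E a b := by
  classical
  set att : Finset S := Finset.univ.filter fun v => ∃ a, s a = v with hatt
  have hmem : ∀ v : {v // v ∈ att}, ∃ a, s a = v.1 := fun v =>
    (Finset.mem_filter.mp v.2).2
  choose pick hpick using hmem
  refine ⟨att.attach.toList.map pick, ?_, ?_⟩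
  · simp only [List.length_map, Finset.length_toList, Finset.card_attach]
    exact Finset.card_le_univ att
  · intro a
    have hv : s a ∈ att := Finset.mem_filter.mpr ⟨Finset.mem_univ _, ⟨a, rfl⟩⟩
    refine ⟨pick ⟨s a, hv⟩, ?_, hE _ _ (hpick ⟨s a, hv⟩).symm⟩
    simp only [List.mem_map]
    exact ⟨⟨s a, hv⟩, by simp, rfl⟩

end Aux
section Main

open ISRL

theorem main_aux {m : ℕ} {Var : Type} [Fintype Var] [DecidableEq Var] (IS : ISRL m Var)
    (Q : Var → Type) [∀ p, Fintype (Q p)] (dfa : ∀ p, DFA IS.G (Q p)) (n : ℕ) :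
    ∀ φ : EHSFormula m Var, fsize φ ≤ n →
    ∃ reps : List (ISRL.Interval IS),
      reps.length ≤ fval (2 * Fintype.card IS.G ^ 2 * ∏ p, Fintype.card (Q p)) φ ∧
      ∀ I : ISRL.Interval IS, ∃ J ∈ reps, MCTEq IS Q dfa φ I J := by
  induction n with
  | zero => intro φ h; have := fsize_pos φ; omega
  | succ n ih =>
    intro φ hφ
    classical
    have hr : ∀ χ : {χ // χ ∈ TL φ}, ∃ reps : List (ISRL.Interval IS),
        reps.length ≤ fval (2 * Fintype.card IS.G ^ 2 * ∏ p, Fintype.card (Q p)) (body χ.1) ∧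
        ∀ I : ISRL.Interval IS, ∃ J ∈ reps, MCTEq IS Q dfa (body χ.1) I J := fun χ =>
      ih (body χ.1) (by have := fsize_body_lt φ χ.1 χ.2; omega)
    choose r hrlen hrex using hr
    set S := IS.G × IS.G × Prop × ((p : Var) → Q p) ×
      ((χ : {χ // χ ∈ TL φ}) → Fin (r χ).length → Prop) with hS
    set sig : ISRL.Interval IS → S := fun I =>
      ⟨IS.gOf I.first, IS.gOf I.last, I.isPt, fun p => (dfa p).eval I.gword,
       fun χ k => ∃ J, IS.modRel χ.1 I J ∧ MCTEq IS Q dfa (body χ.1) ((r χ).get k) J⟩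
      with hsig
    have hE : ∀ I I', sig I = sig I' → MCTEq IS Q dfa φ I I' := by
      intro I I' h
      have h1 : IS.gOf I.first = IS.gOf I'.first := congrArg (fun x : S => x.1) h
      have h2 : IS.gOf I.last = IS.gOf I'.last := congrArg (fun x : S => x.2.1) h
      have h3 : (I.isPt : Prop) = I'.isPt := congrArg (fun x : S => x.2.2.1) h
      have h4 : (fun p => (dfa p).eval I.gword) = (fun p => (dfa p).eval I'.gword) :=
        congrArg (fun x : S => x.2.2.2.1) h
      have h5 : (fun (χ : {χ // χ ∈ TL φ}) (k : Fin (r χ).length) =>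
            ∃ J, IS.modRel χ.1 I J ∧ MCTEq IS Q dfa (body χ.1) ((r χ).get k) J) =
          (fun (χ : {χ // χ ∈ TL φ}) (k : Fin (r χ).length) =>
            ∃ J, IS.modRel χ.1 I' J ∧ MCTEq IS Q dfa (body χ.1) ((r χ).get k) J) :=
        congrArg (fun x : S => x.2.2.2.2) h
      rw [ISRL.MCTEq]
      refine ⟨h1, h2, iff_of_eq h3, fun p => congrFun h4 p, fun χ hχ => ?_⟩
      constructor
      · intro J hJ
        obtain ⟨J₀, hJ₀mem, hJ₀⟩ := hrex ⟨χ, hχ⟩ J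
        obtain ⟨k, hk⟩ := List.get_of_mem hJ₀mem
        have hp : ∃ J₂, IS.modRel χ I J₂ ∧ MCTEq IS Q dfa (body χ) ((r ⟨χ, hχ⟩).get k) J₂ :=
          ⟨J, hJ, by rw [hk]; exact mctEq_symm hJ₀⟩
        rw [congrFun (congrFun h5 ⟨χ, hχ⟩) k] at hp
        obtain ⟨J', hJ', he'⟩ := hp
        rw [hk] at he'
        exact ⟨J', hJ', mctEq_trans hJ₀ he'⟩
      · intro J hJ
        obtain ⟨J₀, hJ₀mem, hJ₀⟩ := hrex ⟨χ, hχ⟩ J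
        obtain ⟨k, hk⟩ := List.get_of_mem hJ₀mem
        have hp : ∃ J₂, IS.modRel χ I' J₂ ∧ MCTEq IS Q dfa (body χ) ((r ⟨χ, hχ⟩).get k) J₂ :=
          ⟨J, hJ, by rw [hk]; exact mctEq_symm hJ₀⟩
        rw [← congrFun (congrFun h5 ⟨χ, hχ⟩) k] at hp
        obtain ⟨J', hJ', he'⟩ := hp
        rw [hk] at he'
        exact ⟨J', hJ', mctEq_symm (mctEq_trans hJ₀ he')⟩
    obtain ⟨reps, hlen, hex⟩ := exists_reps sig (MCTEq IS Q dfa φ) hE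
    have hmem : ∀ I : ISRL.Interval IS, ∃ J ∈ reps, MCTEq IS Q dfa φ I J := hex
    refine ⟨reps, le_trans hlen ?_, hmem⟩
    have hcard : Fintype.card S =
        (2 * Fintype.card IS.G ^ 2 * ∏ p, Fintype.card (Q p)) *
          ∏ χ : {χ // χ ∈ TL φ}, 2 ^ (r χ).length := by
      simp only [hS, Fintype.card_prod, Fintype.card_pi, Fintype.card_fun, Fintype.card_prop,
        Fintype.card_fin, Finset.prod_const, Finset.card_univ]
      ring
    rw [hcard, fval]
    apply Nat.mul_le_mul_left
    rw [Finset.univ_eq_attach]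
    exact Finset.prod_le_prod' fun χ _ => Nat.pow_le_pow_right (by norm_num) (hrlen χ)

end Main
open ISRL in
/-- Lemma 1: for every ISRL with model `M` and every EHS⁺_{AB̄N} formula `φ`,
the set `{MCT_I^φ : I an interval of M}` has at most `f(φ)` elements; i.e. there is a list of
at most `f(φ)` intervals whose modal context trees w.r.t. `φ` exhaust all of them. -/
theorem stmt6 {m : ℕ} {Var : Type} [Fintype Var] [DecidableEq Var] (IS : ISRL m Var)
    (Q : Var → Type) [∀ p, Fintype (Q p)] (dfa : ∀ p, DFA IS.G (Q p))
    (hdfa : ∀ p, (dfa p).accepts = (IS.lab p).matches')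
    (φ : EHSFormula m Var) (hφ : IsABN φ) :
    ∃ reps : List (ISRL.Interval IS),
      reps.length ≤ fval (2 * Fintype.card IS.G ^ 2 * ∏ p, Fintype.card (Q p)) φ ∧
      ∀ I : ISRL.Interval IS, ∃ J ∈ reps, MCTEq IS Q dfa φ I J := by
  exact main_aux IS Q dfa (fsize φ) φ le_rfl
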